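/- For every path-connected topological space X, the second bidirectional topological complexity agrees with the second symmetrized topological complexity: TC^β_2(X) = TC^Σ_2(X). -/
import Mathlib


open unitInterval

noncomputable section

/-- The point `j/(n-1)` of the unit interval, for `j : Fin n`.
These are the `n` evaluation points `0, 1/(n-1), …, (n-2)/(n-1), 1`. -/
def evalPt (n : ℕ) (j : Fin n) : unitInterval :=
  ⟨(j : ℝ) / ((n : ℝ) - 1), by
    have hn : 1 ≤ n := j.pos
    rcases eq_or_lt_of_le hn with h | h
    · have hn1 : n = 1 := h.symm
      subst hn1
      simp [Fin.fin_one_eq_zero j]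
    · have h1 : (0 : ℝ) < (n : ℝ) - 1 := by
        have : (1 : ℝ) < (n : ℝ) := by exact_mod_cast h
        linarith
      constructor
      · exact div_nonneg (Nat.cast_nonneg _) h1.le
      · rw [div_le_one h1]
        have hj : (j : ℕ) + 1 ≤ n := j.is_lt
        have : ((j : ℕ) : ℝ) + 1 ≤ (n : ℝ) := by exact_mod_cast hj
        linarith⟩

/-- Coordinate reversal (the involution `β`) on `n`-tuples:
`β·(x_1,…,x_n) = (x_n,…,x_1)`. -/
def rtuple {X : Type*} {n : ℕ} (x : Fin n → X) : Fin n → X := fun j => x j.rev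

/-- Path reversal (the involution `β`) on the free path space `C(I,X)`:
`(β·γ)(t) = γ(1-t)`. -/
def rpath {X : Type*} [TopologicalSpace X] (γ : C(unitInterval, X)) : C(unitInterval, X) :=
  γ.comp ⟨unitInterval.symm, unitInterval.continuous_symm⟩

/-- `X^n` can be covered by `k` open sets, on each of which there is a continuous
section of the evaluation map `e_n : C(I,X) → X^n`,
`γ ↦ (γ(0), γ(1/(n-1)), …, γ(1))`. -/
def HasPlanners (X : Type*) [TopologicalSpace X] (n k : ℕ) : Prop :=
  ∃ U : Fin k → Set (Fin n → X),
    (∀ i, IsOpen (U i)) ∧ (⋃ i, U i) = Set.univ ∧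
    (∀ i, ∃ s : C(U i, C(unitInterval, X)),
      ∀ x : U i, ∀ j : Fin n, s x (evalPt n j) = (x : Fin n → X) j)

/-- The `n`-th (ordinary, higher) topological complexity `TC_n(X)`, as a value in `ℕ∞`. -/
def TCn (X : Type*) [TopologicalSpace X] (n : ℕ) : ℕ∞ :=
  sInf {k : ℕ∞ | ∃ m : ℕ, (m : ℕ∞) = k ∧ HasPlanners X n m}

/-- `X^n` can be covered by `k` β-invariant open sets, on each of which there is a
continuous β-equivariant section of the evaluation map `e_n : C(I,X) → X^n`
(a bidirectional motion planner). -/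
def HasBidirPlanners (X : Type*) [TopologicalSpace X] (n k : ℕ) : Prop :=
  ∃ U : Fin k → Set (Fin n → X),
    (∀ i, IsOpen (U i)) ∧ (⋃ i, U i) = Set.univ ∧
    (∀ i, ∀ x ∈ U i, rtuple x ∈ U i) ∧
    (∀ i, ∃ s : C(U i, C(unitInterval, X)),
      (∀ x : U i, ∀ j : Fin n, s x (evalPt n j) = (x : Fin n → X) j) ∧
      (∀ x : U i, ∀ hx : rtuple (x : Fin n → X) ∈ U i,
        s ⟨rtuple (x : Fin n → X), hx⟩ = rpath (s x)))

/-- The `n`-th bidirectional topological complexity `TC^β_n(X)`, as a value in `ℕ∞`. -/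
def TCbeta (X : Type*) [TopologicalSpace X] (n : ℕ) : ℕ∞ :=
  sInf {k : ℕ∞ | ∃ m : ℕ, (m : ℕ∞) = k ∧ HasBidirPlanners X n m}

/-- The action of a permutation `sg ∈ Σ_n` on `n`-tuples (by permuting coordinates). -/
def permTuple {X : Type*} {n : ℕ} (sg : Equiv.Perm (Fin n)) (x : Fin n → X) : Fin n → X :=
  fun j => x (sg j)

/-- `X^n` can be covered by `k` `Σ_n`-invariant open sets, on each of which there is a
continuous `Σ_n`-equivariant section of `E_n : X^{J_n} → X^n`,
`(α_1,…,α_n) ↦ (α_1(1),…,α_n(1))`, where `X^{J_n}` is the space of `n`-tuples of paths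
with a common initial point. -/
def HasSymPlanners (X : Type*) [TopologicalSpace X] (n k : ℕ) : Prop :=
  ∃ U : Fin k → Set (Fin n → X),
    (∀ i, IsOpen (U i)) ∧ (⋃ i, U i) = Set.univ ∧
    (∀ i, ∀ sg : Equiv.Perm (Fin n), ∀ x ∈ U i, permTuple sg x ∈ U i) ∧
    (∀ i, ∃ s : C(U i, Fin n → C(unitInterval, X)),
      (∀ x : U i, ∀ j j' : Fin n, s x j 0 = s x j' 0) ∧
      (∀ x : U i, ∀ j : Fin n, s x j 1 = (x : Fin n → X) j) ∧
      (∀ x : U i, ∀ sg : Equiv.Perm (Fin n),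
        ∀ hx : permTuple sg (x : Fin n → X) ∈ U i,
        s ⟨permTuple sg (x : Fin n → X), hx⟩ = permTuple sg (s x)))

/-- The `n`-th symmetrized topological complexity `TC^Σ_n(X)`, as a value in `ℕ∞`. -/
def TCsym (X : Type*) [TopologicalSpace X] (n : ℕ) : ℕ∞ :=
  sInf {k : ℕ∞ | ∃ m : ℕ, (m : ℕ∞) = k ∧ HasSymPlanners X n m}

/-- The unit sphere `S^m ⊂ ℝ^{m+1}`. -/
abbrev Sph (m : ℕ) : Type :=
  Metric.sphere (0 : EuclideanSpace ℝ (Fin (m + 1))) 1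

end

noncomputable section

-- auxiliary

lemma perm2 (sg : Equiv.Perm (Fin 2)) : sg = 1 ∨ sg = Equiv.swap 0 1 := by
  revert sg; decide

lemma permTuple_one {X : Type*} (x : Fin 2 → X) : permTuple 1 x = x := rfl

lemma permTuple_swap {X : Type*} (x : Fin 2 → X) :
    permTuple (Equiv.swap 0 1) x = rtuple x := by
  funext j; fin_cases j <;> simp [permTuple, rtuple, Fin.rev] <;> rfl

lemma evalPt_two_zero : evalPt 2 0 = 0 := by
  apply Subtype.ext; norm_num [evalPt]

lemma evalPt_two_one : evalPt 2 1 = 1 := by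
  apply Subtype.ext; norm_num [evalPt]

def pcl (r : ℝ) : unitInterval := Set.projIcc 0 1 zero_le_one r

lemma continuous_pcl : Continuous pcl := continuous_projIcc (h := zero_le_one)

lemma pcl_of_mem {r : ℝ} (h : r ∈ Set.Icc (0:ℝ) 1) : pcl r = ⟨r, h⟩ :=
  Set.projIcc_of_mem _ h

lemma pcl_zero : pcl 0 = 0 := by
  apply Subtype.ext
  rw [pcl_of_mem ⟨le_refl (0:ℝ), zero_le_one⟩]; rfl

lemma pcl_one : pcl 1 = 1 := by
  apply Subtype.ext
  rw [pcl_of_mem ⟨zero_le_one, le_refl (1:ℝ)⟩]; rfl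


def hh1 : C(unitInterval, unitInterval) :=
  ⟨fun t => pcl ((1 - (t:ℝ)) / 2), continuous_pcl.comp (by continuity)⟩
def hh2 : C(unitInterval, unitInterval) :=
  ⟨fun t => pcl ((1 + (t:ℝ)) / 2), continuous_pcl.comp (by continuity)⟩

lemma mem01_1 (t : unitInterval) : (1 - (t:ℝ)) / 2 ∈ Set.Icc (0:ℝ) 1 := by
  constructor <;> [nlinarith [t.2.1, t.2.2]; nlinarith [t.2.1, t.2.2]]

lemma mem01_2 (t : unitInterval) : (1 + (t:ℝ)) / 2 ∈ Set.Icc (0:ℝ) 1 := by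
  constructor <;> [nlinarith [t.2.1, t.2.2]; nlinarith [t.2.1, t.2.2]]

lemma symm_hh1 (t : unitInterval) : unitInterval.symm (hh1 t) = hh2 t := by
  apply Subtype.ext
  simp only [hh1, hh2, ContinuousMap.coe_mk, pcl_of_mem (mem01_1 t), pcl_of_mem (mem01_2 t),
    unitInterval.coe_symm_eq]
  ring

lemma symm_hh2 (t : unitInterval) : unitInterval.symm (hh2 t) = hh1 t := by
  apply Subtype.ext
  simp only [hh1, hh2, ContinuousMap.coe_mk, pcl_of_mem (mem01_1 t), pcl_of_mem (mem01_2 t),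
    unitInterval.coe_symm_eq]
  ring

lemma hh1_zero : hh1 0 = hh2 0 := by
  simp [hh1, hh2]

lemma hh1_one : hh1 1 = 0 := by
  have : ((1:unitInterval):ℝ) = 1 := rfl
  simp only [hh1, ContinuousMap.coe_mk, this]
  norm_num [pcl_zero]

lemma hh2_one : hh2 1 = 1 := by
  have : ((1:unitInterval):ℝ) = 1 := rfl
  simp only [hh2, ContinuousMap.coe_mk, this]
  norm_num [pcl_one]

lemma bidir_to_sym (X : Type*) [TopologicalSpace X] (m : ℕ)
    (h : HasBidirPlanners X 2 m) : HasSymPlanners X 2 m := by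
  obtain ⟨U, hO, hC, hInv, hS⟩ := h
  refine ⟨U, hO, hC, ?_, ?_⟩
  · intro i sg x hx
    rcases perm2 sg with rfl | rfl
    · rwa [permTuple_one]
    · rw [permTuple_swap]; exact hInv i x hx
  · intro i
    obtain ⟨s, hend, heq⟩ := hS i
    refine ⟨⟨fun x j => (s x).comp (if j = 0 then hh1 else hh2), ?_⟩, ?_, ?_, ?_⟩
    · exact continuous_pi fun j => (ContinuousMap.continuous_precomp _).comp s.continuous
    · intro x j j'
      fin_cases j <;> fin_cases j' <;>
        simp [ContinuousMap.comp_apply, hh1_zero]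
    · intro x j
      fin_cases j
      · simpa [ContinuousMap.comp_apply, hh1_one, evalPt_two_zero] using hend x 0
      · simpa [ContinuousMap.comp_apply, hh2_one, evalPt_two_one] using hend x 1
    · intro x sg hx
      rcases perm2 sg with rfl | rfl
      · have hx' : (⟨permTuple 1 (x : Fin 2 → X), hx⟩ : U i) = x :=
          Subtype.ext (permTuple_one _)
        rw [hx']; rfl
      · have hx2 : rtuple (x : Fin 2 → X) ∈ U i := by
          rwa [permTuple_swap] at hx
        have hx' : (⟨permTuple (Equiv.swap 0 1) (x : Fin 2 → X), hx⟩ : U i)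
            = ⟨rtuple (x : Fin 2 → X), hx2⟩ := Subtype.ext (permTuple_swap _)
        rw [hx']
        show (fun j => (s _).comp (if j = 0 then hh1 else hh2)) = _
        funext j
        rw [heq x hx2]
        fin_cases j
        · show (rpath (s x)).comp hh1 = (s x).comp (if (Equiv.swap 0 1 (0 : Fin 2)) = 0 then hh1 else hh2)
          rw [Equiv.swap_apply_left]
          ext t
          simp [rpath, ContinuousMap.comp_apply, symm_hh1]
        · show (rpath (s x)).comp hh2 = (s x).comp (if (Equiv.swap 0 1 (1 : Fin 2)) = 0 then hh1 else hh2)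
          rw [Equiv.swap_apply_right]
          ext t
          simp [rpath, ContinuousMap.comp_apply, symm_hh2]

def gg1 : C(unitInterval, unitInterval) :=
  ⟨fun t => pcl (1 - 2*(t:ℝ)), continuous_pcl.comp (by continuity)⟩
def gg2 : C(unitInterval, unitInterval) :=
  ⟨fun t => pcl (2*(t:ℝ) - 1), continuous_pcl.comp (by continuity)⟩

lemma gg1_symm (t : unitInterval) : gg1 (unitInterval.symm t) = gg2 t := by
  simp only [gg1, gg2, ContinuousMap.coe_mk, unitInterval.coe_symm_eq]
  congr 1; ring

lemma gg2_symm (t : unitInterval) : gg2 (unitInterval.symm t) = gg1 t := by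
  simp only [gg1, gg2, ContinuousMap.coe_mk, unitInterval.coe_symm_eq]
  congr 1; ring

lemma gg1_zero : gg1 0 = 1 := by
  have : ((0:unitInterval):ℝ) = 0 := rfl
  simp only [gg1, ContinuousMap.coe_mk, this]
  norm_num [pcl_one]

lemma gg2_one : gg2 1 = 1 := by
  have : ((1:unitInterval):ℝ) = 1 := rfl
  simp only [gg2, ContinuousMap.coe_mk, this]
  norm_num [pcl_one]

lemma gg1_half {t : unitInterval} (h : (t:ℝ) = 1/2) : gg1 t = 0 := by
  simp only [gg1, ContinuousMap.coe_mk, h]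
  norm_num [pcl_zero]

lemma gg2_half {t : unitInterval} (h : (t:ℝ) = 1/2) : gg2 t = 0 := by
  simp only [gg2, ContinuousMap.coe_mk, h]
  norm_num [pcl_zero]

lemma sym_to_bidir (X : Type*) [TopologicalSpace X] (m : ℕ)
    (h : HasSymPlanners X 2 m) : HasBidirPlanners X 2 m := by
  obtain ⟨U, hO, hC, hInv, hS⟩ := h
  refine ⟨U, hO, hC, ?_, ?_⟩
  · intro i x hx
    have := hInv i (Equiv.swap 0 1) x hx
    rwa [permTuple_swap] at this
  · intro i
    obtain ⟨s, hcs, hend, heq⟩ := hS i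
    have c1 : Continuous fun p : U i × unitInterval => (s p.1 0) (gg1 p.2) :=
      ContinuousEval.continuous_eval.comp
        (((continuous_apply (0 : Fin 2)).comp (s.continuous.comp continuous_fst)).prodMk
          (gg1.continuous.comp continuous_snd))
    have c2 : Continuous fun p : U i × unitInterval => (s p.1 1) (gg2 p.2) :=
      ContinuousEval.continuous_eval.comp
        (((continuous_apply (1 : Fin 2)).comp (s.continuous.comp continuous_fst)).prodMk
          (gg2.continuous.comp continuous_snd))
    set G : C(U i × unitInterval, X) :=
      ⟨fun p => if ((p.2 : unitInterval) : ℝ) ≤ 1/2 then s p.1 0 (gg1 p.2)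
          else s p.1 1 (gg2 p.2), by
        refine Continuous.if_le c1 c2 (continuous_subtype_val.comp continuous_snd)
          continuous_const ?_
        intro p hp
        rw [gg1_half hp, gg2_half hp]
        exact hcs p.1 0 1⟩ with hG
    refine ⟨G.curry, ?_, ?_⟩
    · intro x j
      fin_cases j
      · show (G.curry x) (evalPt 2 0) = (x : Fin 2 → X) 0
        have h0 : (G.curry x) (evalPt 2 0) =
            (if ((0:unitInterval):ℝ) ≤ 1/2 then s x 0 (gg1 0) else s x 1 (gg2 0)) := by
          rw [evalPt_two_zero]; rfl
        rw [h0, if_pos (by norm_num), gg1_zero]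
        exact hend x 0
      · show (G.curry x) (evalPt 2 1) = (x : Fin 2 → X) 1
        have h1 : (G.curry x) (evalPt 2 1) =
            (if ((1:unitInterval):ℝ) ≤ 1/2 then s x 0 (gg1 1) else s x 1 (gg2 1)) := by
          rw [evalPt_two_one]; rfl
        rw [h1, if_neg (by norm_num), gg2_one]
        exact hend x 1
    · intro x hx
      have hx' : permTuple (Equiv.swap 0 1) (x : Fin 2 → X) ∈ U i := by
        rwa [permTuple_swap]
      have hxe : (⟨rtuple (x : Fin 2 → X), hx⟩ : U i)
          = ⟨permTuple (Equiv.swap 0 1) (x : Fin 2 → X), hx'⟩ :=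
        Subtype.ext (permTuple_swap _).symm
      have hs : s ⟨rtuple (x : Fin 2 → X), hx⟩ = permTuple (Equiv.swap 0 1) (s x) := by
        rw [hxe]; exact heq x _ hx'
      have h0 : s ⟨rtuple (x : Fin 2 → X), hx⟩ 0 = s x 1 := by
        rw [hs]; show s x (Equiv.swap 0 1 0) = _; rw [Equiv.swap_apply_left]
      have h1 : s ⟨rtuple (x : Fin 2 → X), hx⟩ 1 = s x 0 := by
        rw [hs]; show s x (Equiv.swap 0 1 1) = _; rw [Equiv.swap_apply_right]
      ext t
      have lhs : (G.curry ⟨rtuple (x : Fin 2 → X), hx⟩) t =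
          (if ((t:unitInterval):ℝ) ≤ 1/2 then s x 1 (gg1 t) else s x 0 (gg2 t)) := by
        show (if ((t:unitInterval):ℝ) ≤ 1/2
            then s ⟨rtuple (x : Fin 2 → X), hx⟩ 0 (gg1 t)
            else s ⟨rtuple (x : Fin 2 → X), hx⟩ 1 (gg2 t)) = _
        rw [h0, h1]
      have rhs : (rpath (G.curry x)) t =
          (if ((unitInterval.symm t : unitInterval) : ℝ) ≤ 1/2
            then s x 0 (gg1 (unitInterval.symm t)) else s x 1 (gg2 (unitInterval.symm t))) := rfl
      rw [lhs, rhs]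
      rcases lt_trichotomy ((t : unitInterval) : ℝ) (1/2) with hlt | heqt | hgt
      · rw [if_pos hlt.le, if_neg (by rw [unitInterval.coe_symm_eq]; linarith), gg2_symm]
      · rw [if_pos heqt.le, if_pos (by rw [unitInterval.coe_symm_eq]; linarith),
          gg1_half heqt, gg1_symm, gg2_half heqt]
        exact hcs x 1 0
      · rw [if_neg (by linarith), if_pos (by rw [unitInterval.coe_symm_eq]; linarith), gg1_symm]

end

/-- For every path-connected space `X`,
`TC^β_2(X) = TC^Σ_2(X)`. -/
theorem TCbeta_two_eq_TCsym_two (X : Type*) [TopologicalSpace X] [PathConnectedSpace X] :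
    TCbeta X 2 = TCsym X 2 := by
  unfold TCbeta TCsym
  congr 1
  ext k
  simp only [Set.mem_setOf_eq]
  constructor
  · rintro ⟨m, rfl, h⟩; exact ⟨m, rfl, bidir_to_sym X m h⟩
  · rintro ⟨m, rfl, h⟩; exact ⟨m, rfl, sym_to_bidir X m h⟩
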